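/- Let d₀, d_∞ ∈ ℕ, x ∈ (−1,1) with x ≠ 0, and s, c ∈ ℝ. Define F(z) := (1+z)^{d₀+1}(1−z)^{d_∞+1}·((1+xz) + c(1−z²)). Then F''(−1/x) = 2sx·(1 − 1/x)^{d₀}·(1 + 1/x)^{d_∞} if and only if c = c(s,x). -/

import Mathlib

/-- Denominator of the coefficient of the extremal polynomial over a CSC Riemann surface. -/
noncomputable def Dden (d₀ d₁ : ℕ) (x : ℝ) : ℝ :=
  (2 + (d₀ : ℝ) * (1 + x) + (d₁ : ℝ) * (1 - x)) *
    (4 + (d₀ : ℝ) * (1 + x) + (d₁ : ℝ) * (1 - x)) +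
  (4 + (d₀ : ℝ) + (d₁ : ℝ)) * (1 - x ^ 2)

/-- The coefficient `c(s,x)` of the extremal polynomial. -/
noncomputable def cCoeff (d₀ d₁ : ℕ) (s x : ℝ) : ℝ :=
  -(2 * x ^ 2 * (2 + (d₀ : ℝ) * (1 + x) + (d₁ : ℝ) * (1 - x) - s * x)) / Dden d₀ d₁ x

lemma aux_pow (n : ℕ) {u : ℝ} (hu : u ≠ 0) : (n : ℝ) * u ^ (n - 1) = (n : ℝ) * u ^ n / u := by
  cases n with
  | zero => simp
  | succ m =>
    rw [Nat.add_sub_cancel, pow_succ]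
    field_simp

/-- with `F(z) = (1+z)^{d₀+1}(1-z)^{d_∞+1}((1+xz) + c(1-z²))`, the
condition `F''(-1/x) = 2sx (1-1/x)^{d₀} (1+1/x)^{d_∞}` holds iff `c = c(s,x)`. -/
theorem stmt7 (d₀ d₁ : ℕ) (x : ℝ) (hx : x ∈ Set.Ioo (-1:ℝ) 1) (hx0 : x ≠ 0)
    (s c : ℝ) (F : ℝ → ℝ)
    (hF : ∀ z, F z = (1 + z) ^ (d₀ + 1) * (1 - z) ^ (d₁ + 1) *
      ((1 + x * z) + c * (1 - z ^ 2))) :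
    deriv (deriv F) (-1 / x) = 2 * s * x * (1 - 1 / x) ^ d₀ * (1 + 1 / x) ^ d₁ ↔
      c = cCoeff d₀ d₁ s x := by
  obtain ⟨hxm, hx1⟩ := hx
  have hxs : x - 1 ≠ 0 := sub_ne_zero.mpr (ne_of_lt hx1)
  have hxp : x + 1 ≠ 0 := by intro h; linarith
  have hu0 : (1 - 1/x : ℝ) ≠ 0 := by
    intro h
    have hxx : x * (1 - 1/x) = x - 1 := by field_simp
    rw [h, mul_zero] at hxx
    exact hxs hxx.symm
  have hv0 : (1 + 1/x : ℝ) ≠ 0 := by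
    intro h
    have hxx : x * (1 + 1/x) = x + 1 := by field_simp
    rw [h, mul_zero] at hxx
    exact hxp hxx.symm
  have hD : 0 < Dden d₀ d₁ x := by
    have h0 : (0:ℝ) ≤ (d₀:ℝ) := Nat.cast_nonneg _
    have h1 : (0:ℝ) ≤ (d₁:ℝ) := Nat.cast_nonneg _
    have ha : (0:ℝ) ≤ (d₀:ℝ)*(1+x) + (d₁:ℝ)*(1-x) := by nlinarith
    have hx2 : (0:ℝ) < 1 - x^2 := by nlinarith
    have hm : (0:ℝ) ≤ 4 + (d₀:ℝ) + (d₁:ℝ) := by linarith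
    rw [Dden]
    nlinarith [mul_nonneg ha ha, mul_nonneg hm hx2.le]
  have hFf : F = fun z : ℝ => (1 + z) ^ (d₀ + 1) * (1 - z) ^ (d₁ + 1) *
      ((1 + x * z) + c * (1 - z ^ 2)) := funext hF
  subst hFf
  -- first derivative
  have hd1 : ∀ z : ℝ, HasDerivAt (fun z : ℝ => (1 + z) ^ (d₀ + 1) * (1 - z) ^ (d₁ + 1) *
      ((1 + x * z) + c * (1 - z ^ 2)))
      ((((d₀:ℝ)+1) * (1+z)^d₀ * (1-z)^(d₁+1) - ((d₁:ℝ)+1) * (1+z)^(d₀+1) * (1-z)^d₁) *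
          ((1 + x*z) + c*(1 - z^2))
        + (1+z)^(d₀+1) * (1-z)^(d₁+1) * (x - 2*c*z)) z := by
    intro z
    have hu : HasDerivAt (fun z : ℝ => (1+z)^(d₀+1)) (((d₀:ℝ)+1) * (1+z)^d₀) z := by
      have h := ((hasDerivAt_id z).const_add 1).fun_pow (d₀+1)
      convert h using 1
      all_goals try with_reducible_and_instances rfl
      all_goals try simp only [id_eq, Nat.add_sub_cancel]
      all_goals try push_cast
      all_goals try ring
    have hv : HasDerivAt (fun z : ℝ => (1-z)^(d₁+1)) (-(((d₁:ℝ)+1) * (1-z)^d₁)) z := by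
      have h := ((hasDerivAt_id z).const_sub 1).fun_pow (d₁+1)
      convert h using 1
      all_goals try with_reducible_and_instances rfl
      all_goals try simp only [id_eq, Nat.add_sub_cancel]
      all_goals try push_cast
      all_goals try ring
    have hq : HasDerivAt (fun z : ℝ => (1 + x*z) + c*(1 - z^2)) (x - 2*c*z) z := by
      have h1 : HasDerivAt (fun z : ℝ => 1 + x*z) x z := by
        simpa using ((hasDerivAt_id z).const_mul x).const_add 1
      have h2 : HasDerivAt (fun z : ℝ => c*(1 - z^2)) (-(2*c*z)) z := by
        have h3 := ((hasDerivAt_pow 2 z).const_sub 1).const_mul c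
        convert h3 using 1
        all_goals try with_reducible_and_instances rfl
        all_goals try simp only [id_eq, pow_one, Nat.add_sub_cancel]
        all_goals try norm_num
        all_goals try ring
      convert h1.fun_add h2 using 1
      all_goals try with_reducible_and_instances rfl
      all_goals try ring
    convert (hu.fun_mul hv).fun_mul hq using 1
    all_goals try with_reducible_and_instances rfl
    all_goals try ring
  have hD1 : deriv (fun z : ℝ => (1 + z) ^ (d₀ + 1) * (1 - z) ^ (d₁ + 1) *
      ((1 + x * z) + c * (1 - z ^ 2)))
      = fun z : ℝ =>
      (((d₀:ℝ)+1) * (1+z)^d₀ * (1-z)^(d₁+1) - ((d₁:ℝ)+1) * (1+z)^(d₀+1) * (1-z)^d₁) *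
          ((1 + x*z) + c*(1 - z^2))
        + (1+z)^(d₀+1) * (1-z)^(d₁+1) * (x - 2*c*z) :=
    funext fun z => (hd1 z).deriv
  rw [hD1]
  -- second derivative, at p = -1/x
  have hd2 : HasDerivAt (fun z : ℝ =>
      (((d₀:ℝ)+1) * (1+z)^d₀ * (1-z)^(d₁+1) - ((d₁:ℝ)+1) * (1+z)^(d₀+1) * (1-z)^d₁) *
          ((1 + x*z) + c*(1 - z^2))
        + (1+z)^(d₀+1) * (1-z)^(d₁+1) * (x - 2*c*z))
      ((((d₀:ℝ)+1) * ((d₀:ℝ) * (1 - 1/x)^(d₀-1)) * (1 + 1/x)^(d₁+1)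
          - 2*((d₀:ℝ)+1)*((d₁:ℝ)+1) * (1 - 1/x)^d₀ * (1 + 1/x)^d₁
          + ((d₁:ℝ)+1) * ((d₁:ℝ) * (1 + 1/x)^(d₁-1)) * (1 - 1/x)^(d₀+1)) *
          ((1 + x*(-1/x)) + c*(1 - (-1/x)^2))
        + 2*((((d₀:ℝ)+1) * (1 - 1/x)^d₀ * (1 + 1/x)^(d₁+1)
          - ((d₁:ℝ)+1) * (1 - 1/x)^(d₀+1) * (1 + 1/x)^d₁)) * (x - 2*c*(-1/x))
        - 2*c*((1 - 1/x)^(d₀+1) * (1 + 1/x)^(d₁+1))) (-1/x) := by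
    set p : ℝ := -1/x with hp
    have hA : HasDerivAt (fun z : ℝ => (1+z)^d₀) ((d₀:ℝ) * (1+p)^(d₀-1)) p := by
      have h := ((hasDerivAt_id p).const_add 1).fun_pow d₀
      convert h using 1
      all_goals try with_reducible_and_instances rfl
      all_goals try simp only [id_eq]
      all_goals try ring
    have hB : HasDerivAt (fun z : ℝ => (1-z)^d₁) (-((d₁:ℝ) * (1-p)^(d₁-1))) p := by
      have h := ((hasDerivAt_id p).const_sub 1).fun_pow d₁
      convert h using 1
      all_goals try with_reducible_and_instances rfl
      all_goals try simp only [id_eq]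
      all_goals try ring
    have hA1 : HasDerivAt (fun z : ℝ => (1+z)^(d₀+1)) (((d₀:ℝ)+1) * (1+p)^d₀) p := by
      have h := ((hasDerivAt_id p).const_add 1).fun_pow (d₀+1)
      convert h using 1
      all_goals try with_reducible_and_instances rfl
      all_goals try simp only [id_eq, Nat.add_sub_cancel]
      all_goals try push_cast
      all_goals try ring
    have hB1 : HasDerivAt (fun z : ℝ => (1-z)^(d₁+1)) (-(((d₁:ℝ)+1) * (1-p)^d₁)) p := by
      have h := ((hasDerivAt_id p).const_sub 1).fun_pow (d₁+1)
      convert h using 1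
      all_goals try with_reducible_and_instances rfl
      all_goals try simp only [id_eq, Nat.add_sub_cancel]
      all_goals try push_cast
      all_goals try ring
    have hq : HasDerivAt (fun z : ℝ => (1 + x*z) + c*(1 - z^2)) (x - 2*c*p) p := by
      have h1 : HasDerivAt (fun z : ℝ => 1 + x*z) x p := by
        simpa using ((hasDerivAt_id p).const_mul x).const_add 1
      have h2 : HasDerivAt (fun z : ℝ => c*(1 - z^2)) (-(2*c*p)) p := by
        have h3 := ((hasDerivAt_pow 2 p).const_sub 1).const_mul c
        convert h3 using 1
        all_goals try with_reducible_and_instances rfl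
        all_goals try simp only [id_eq, pow_one, Nat.add_sub_cancel]
        all_goals try norm_num
        all_goals try ring
      convert h1.fun_add h2 using 1
      all_goals try with_reducible_and_instances rfl
      all_goals try ring
    have hr : HasDerivAt (fun z : ℝ => x - 2*c*z) (-(2*c)) p := by
      have h := ((hasDerivAt_id p).const_mul (2*c)).const_sub x
      convert h using 1
      all_goals try with_reducible_and_instances rfl
      all_goals try simp only [id_eq]
      all_goals try ring
    have hS : HasDerivAt (fun z : ℝ =>
        ((d₀:ℝ)+1) * (1+z)^d₀ * (1-z)^(d₁+1) - ((d₁:ℝ)+1) * (1+z)^(d₀+1) * (1-z)^d₁)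
        (((d₀:ℝ)+1) * ((d₀:ℝ) * (1+p)^(d₀-1)) * (1-p)^(d₁+1)
          - ((d₀:ℝ)+1) * (1+p)^d₀ * (((d₁:ℝ)+1) * (1-p)^d₁)
          - (((d₁:ℝ)+1) * (((d₀:ℝ)+1) * (1+p)^d₀) * (1-p)^d₁
            - ((d₁:ℝ)+1) * (1+p)^(d₀+1) * ((d₁:ℝ) * (1-p)^(d₁-1)))) p := by
      have h := (((hA.const_mul ((d₀:ℝ)+1)).fun_mul hB1).fun_sub ((hA1.const_mul ((d₁:ℝ)+1)).fun_mul hB))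
      convert h using 1
      all_goals try with_reducible_and_instances rfl
      all_goals try ring
    have hP : HasDerivAt (fun z : ℝ => (1+z)^(d₀+1) * (1-z)^(d₁+1))
        (((d₀:ℝ)+1) * (1+p)^d₀ * (1-p)^(d₁+1) - (1+p)^(d₀+1) * (((d₁:ℝ)+1) * (1-p)^d₁)) p := by
      have h := hA1.fun_mul hB1
      convert h using 1
      all_goals try with_reducible_and_instances rfl
      all_goals try ring
    have h := (hS.fun_mul hq).fun_add (hP.fun_mul hr)
    convert h using 1
    all_goals try with_reducible_and_instances rfl
    all_goals try (funext z)
    all_goals rw [hp]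
    all_goals try ring
  rw [hd2.deriv]
  -- algebraic endgame
  have hxa : (-x + x^2 : ℝ) ≠ 0 := by
    have h : (-x + x^2 : ℝ) = x*(x-1) := by ring
    rw [h]; exact mul_ne_zero hx0 hxs
  have hxb : (x + x^2 : ℝ) ≠ 0 := by
    have h : (x + x^2 : ℝ) = x*(x+1) := by ring
    rw [h]; exact mul_ne_zero hx0 hxp
  have key : ((((d₀:ℝ)+1) * ((d₀:ℝ) * (1 - 1/x)^(d₀-1)) * (1 + 1/x)^(d₁+1)
          - 2*((d₀:ℝ)+1)*((d₁:ℝ)+1) * (1 - 1/x)^d₀ * (1 + 1/x)^d₁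
          + ((d₁:ℝ)+1) * ((d₁:ℝ) * (1 + 1/x)^(d₁-1)) * (1 - 1/x)^(d₀+1)) *
          ((1 + x*(-1/x)) + c*(1 - (-1/x)^2))
        + 2*((((d₀:ℝ)+1) * (1 - 1/x)^d₀ * (1 + 1/x)^(d₁+1)
          - ((d₁:ℝ)+1) * (1 - 1/x)^(d₀+1) * (1 + 1/x)^d₁)) * (x - 2*c*(-1/x))
        - 2*c*((1 - 1/x)^(d₀+1) * (1 + 1/x)^(d₁+1)))
      = (1 - 1/x)^d₀ * (1 + 1/x)^d₁ *
        (c * Dden d₀ d₁ x / x^2 + 2*(2 + (d₀:ℝ)*(1+x) + (d₁:ℝ)*(1-x))) := by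
    rw [aux_pow d₀ hu0, aux_pow d₁ hv0]
    simp only [pow_succ]
    generalize (1 - 1/x : ℝ)^d₀ = U
    generalize (1 + 1/x : ℝ)^d₁ = V
    rw [Dden]
    field_simp
    ring
  rw [key, show (2*s*x*(1 - 1/x)^d₀*(1 + 1/x)^d₁ : ℝ)
      = (1 - 1/x)^d₀ * (1 + 1/x)^d₁ * (2*s*x) by ring,
    mul_right_inj' (mul_ne_zero (pow_ne_zero _ hu0) (pow_ne_zero _ hv0))]
  rw [cCoeff]
  have hD' : Dden d₀ d₁ x ≠ 0 := ne_of_gt hD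
  constructor
  · intro h
    field_simp at h ⊢
    linear_combination h
  · intro h
    rw [h]
    field_simp
    ring
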